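/- Every graph of the form K_1 * (P_4 + H), the join of a single vertex with the disjoint union of a path on 4 vertices and a 2-regular C_4-free graph H on n − 5 vertices, is K_{2,3}-saturated with exactly 2n − 3 edges. -/

import Mathlib

open SimpleGraph

/-- `G` contains a subgraph isomorphic to the complete bipartite graph `K_{2,3}`. -/
def HasK23 {V : Type*} (G : SimpleGraph V) : Prop :=
  ∃ f : (Fin 2 ⊕ Fin 3) ↪ V,
    ∀ a b, (completeBipartiteGraph (Fin 2) (Fin 3)).Adj a b → G.Adj (f a) (f b)

/-- `G` is `K_{2,3}`-saturated: `K_{2,3}`-free, but adding any edge between two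
non-adjacent vertices creates a `K_{2,3}`. -/
def K23Saturated {V : Type*} (G : SimpleGraph V) : Prop :=
  ¬ HasK23 G ∧ ∀ u v : V, u ≠ v → ¬ G.Adj u v →
    HasK23 (G ⊔ SimpleGraph.fromEdgeSet {s(u, v)})

/-- The join `K₁ * (P₄ + H)`: an apex vertex `Sum.inl ()` joined to the disjoint
union of a path on 4 vertices and a graph `H`. -/
def apexPlusPathFour {m : ℕ} (H : SimpleGraph (Fin m)) :
    SimpleGraph (Unit ⊕ Fin 4 ⊕ Fin m) :=
  SimpleGraph.fromRel (fun x y =>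
    x = Sum.inl () ∨
    (∃ a b : Fin 4, x = Sum.inr (Sum.inl a) ∧ y = Sum.inr (Sum.inl b) ∧
      (SimpleGraph.pathGraph 4).Adj a b) ∨
    (∃ a b : Fin m, x = Sum.inr (Sum.inr a) ∧ y = Sum.inr (Sum.inr b) ∧ H.Adj a b))

namespace APPF

variable {m : ℕ} {H : SimpleGraph (Fin m)}

/-- apex vertex -/
abbrev vA {m : ℕ} : Unit ⊕ Fin 4 ⊕ Fin m := Sum.inl ()
/-- path vertex -/
abbrev vP {m : ℕ} (a : Fin 4) : Unit ⊕ Fin 4 ⊕ Fin m := Sum.inr (Sum.inl a)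
/-- H vertex -/
abbrev vH {m : ℕ} (a : Fin m) : Unit ⊕ Fin 4 ⊕ Fin m := Sum.inr (Sum.inr a)

lemma adj_PP {a b : Fin 4} :
    (apexPlusPathFour H).Adj (vP a) (vP b) ↔ (pathGraph 4).Adj a b := by
  simp only [apexPlusPathFour, fromRel_adj]
  simp
  exact ⟨fun ⟨h1, h⟩ => h.elim id Adj.symm, fun h => ⟨h.ne, Or.inl h⟩⟩

lemma adj_HH {a b : Fin m} :
    (apexPlusPathFour H).Adj (vH a) (vH b) ↔ H.Adj a b := by
  simp only [apexPlusPathFour, fromRel_adj]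
  simp
  exact ⟨fun ⟨h1, h⟩ => h.elim id Adj.symm, fun h => ⟨h.ne, Or.inl h⟩⟩

lemma adj_PH {a : Fin 4} {b : Fin m} :
    ¬ (apexPlusPathFour H).Adj (vP a) (vH b) := by
  simp [apexPlusPathFour, fromRel_adj]

lemma adj_HP {a : Fin m} {b : Fin 4} :
    ¬ (apexPlusPathFour H).Adj (vH a) (vP b) := fun h => adj_PH h.symm

lemma adj_apex_left {x : Unit ⊕ Fin 4 ⊕ Fin m} :
    (apexPlusPathFour H).Adj vA x ↔ x ≠ vA := by
  simp only [apexPlusPathFour, fromRel_adj]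
  simp [eq_comm]

lemma adj_apex_right {x : Unit ⊕ Fin 4 ⊕ Fin m} :
    (apexPlusPathFour H).Adj x vA ↔ x ≠ vA := by
  rw [adj_comm]; exact adj_apex_left

/-- three distinct path-neighbours of a vertex of `P₄` is impossible -/
lemma path_three {a d1 d2 d3 : Fin 4} (h12 : d1 ≠ d2) (h13 : d1 ≠ d3) (h23 : d2 ≠ d3)
    (p1 : (pathGraph 4).Adj d1 a) (p2 : (pathGraph 4).Adj d2 a)
    (p3 : (pathGraph 4).Adj d3 a) : False := by
  simp only [pathGraph_adj] at p1 p2 p3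
  simp only [Ne, Fin.ext_iff] at h12 h13 h23
  omega

/-- two distinct common path-neighbours of two distinct vertices of `P₄` is impossible -/
lemma path_two {a b d1 d2 : Fin 4} (hab : a ≠ b) (h12 : d1 ≠ d2)
    (p1 : (pathGraph 4).Adj d1 a) (p2 : (pathGraph 4).Adj d1 b)
    (p3 : (pathGraph 4).Adj d2 a) (p4 : (pathGraph 4).Adj d2 b) : False := by
  simp only [pathGraph_adj] at p1 p2 p3 p4
  simp only [Ne, Fin.ext_iff] at hab h12
  omega

/-- three distinct `H`-neighbours of a vertex of 2-regular `H` is impossible -/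
lemma H_three (hreg : ∀ v, (H.neighborSet v).ncard = 2) {a d1 d2 d3 : Fin m}
    (h12 : d1 ≠ d2) (h13 : d1 ≠ d3) (h23 : d2 ≠ d3)
    (p1 : H.Adj d1 a) (p2 : H.Adj d2 a) (p3 : H.Adj d3 a) : False := by
  have hsub : ({d1, d2, d3} : Set (Fin m)) ⊆ H.neighborSet a := by
    intro x hx
    rcases hx with rfl | rfl | rfl
    · exact p1.symm
    · exact p2.symm
    · exact p3.symm
  have h3 : ({d1, d2, d3} : Set (Fin m)).ncard = 3 := by
    rw [Set.ncard_insert_of_notMem (by simp [h12, h13]) (Set.toFinite _),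
      Set.ncard_pair h23]
  have := Set.ncard_le_ncard hsub (Set.toFinite _)
  rw [h3, hreg a] at this
  omega

lemma common_A_P {b : Fin 4} {c : Unit ⊕ Fin 4 ⊕ Fin m}
    (h1 : (apexPlusPathFour H).Adj vA c) (h2 : (apexPlusPathFour H).Adj (vP b) c) :
    ∃ d, c = vP d ∧ (pathGraph 4).Adj d b := by
  rcases c with ⟨⟩ | d | d
  · exact absurd rfl h1.ne
  · exact ⟨d, rfl, (adj_PP.mp h2).symm⟩
  · exact absurd h2 adj_PH

lemma common_A_H {b : Fin m} {c : Unit ⊕ Fin 4 ⊕ Fin m}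
    (h1 : (apexPlusPathFour H).Adj vA c) (h2 : (apexPlusPathFour H).Adj (vH b) c) :
    ∃ d, c = vH d ∧ H.Adj d b := by
  rcases c with ⟨⟩ | d | d
  · exact absurd rfl h1.ne
  · exact absurd h2 adj_HP
  · exact ⟨d, rfl, (adj_HH.mp h2).symm⟩

lemma common_P_P {a b : Fin 4} {c : Unit ⊕ Fin 4 ⊕ Fin m}
    (h1 : (apexPlusPathFour H).Adj (vP a) c) (h2 : (apexPlusPathFour H).Adj (vP b) c) :
    c = vA ∨ ∃ d, c = vP d ∧ (pathGraph 4).Adj d a ∧ (pathGraph 4).Adj d b := by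
  rcases c with ⟨⟩ | d | d
  · exact Or.inl rfl
  · exact Or.inr ⟨d, rfl, (adj_PP.mp h1).symm, (adj_PP.mp h2).symm⟩
  · exact absurd h1 adj_PH

lemma common_H_H {a b : Fin m} {c : Unit ⊕ Fin 4 ⊕ Fin m}
    (h1 : (apexPlusPathFour H).Adj (vH a) c) (h2 : (apexPlusPathFour H).Adj (vH b) c) :
    c = vA ∨ ∃ d, c = vH d ∧ H.Adj d a ∧ H.Adj d b := by
  rcases c with ⟨⟩ | d | d
  · exact Or.inl rfl
  · exact absurd h1 adj_HP
  · exact Or.inr ⟨d, rfl, (adj_HH.mp h1).symm, (adj_HH.mp h2).symm⟩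

lemma common_P_H {a : Fin 4} {b : Fin m} {c : Unit ⊕ Fin 4 ⊕ Fin m}
    (h1 : (apexPlusPathFour H).Adj (vP a) c) (h2 : (apexPlusPathFour H).Adj (vH b) c) :
    c = vA := by
  rcases c with ⟨⟩ | d | d
  · rfl
  · exact absurd h2 adj_HP
  · exact absurd h1 adj_PH

lemma no_three_common (hreg : ∀ v, (H.neighborSet v).ncard = 2)
    (hC4 : ∀ a b c d : Fin m, a ≠ c → b ≠ d →
      H.Adj a b → H.Adj b c → H.Adj c d → H.Adj d a → False)
    {x y c1 c2 c3 : Unit ⊕ Fin 4 ⊕ Fin m}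
    (hxy : x ≠ y) (h12 : c1 ≠ c2) (h13 : c1 ≠ c3) (h23 : c2 ≠ c3)
    (hx1 : (apexPlusPathFour H).Adj x c1) (hx2 : (apexPlusPathFour H).Adj x c2)
    (hx3 : (apexPlusPathFour H).Adj x c3)
    (hy1 : (apexPlusPathFour H).Adj y c1) (hy2 : (apexPlusPathFour H).Adj y c2)
    (hy3 : (apexPlusPathFour H).Adj y c3) : False := by
  rcases x with ⟨⟩ | a | a <;> rcases y with ⟨⟩ | b | b
  · exact hxy rfl
  · -- A, P b
    obtain ⟨d1, rfl, p1⟩ := common_A_P hx1 hy1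
    obtain ⟨d2, rfl, p2⟩ := common_A_P hx2 hy2
    obtain ⟨d3, rfl, p3⟩ := common_A_P hx3 hy3
    exact path_three (by simpa using h12) (by simpa using h13) (by simpa using h23) p1 p2 p3
  · -- A, H b
    obtain ⟨d1, rfl, p1⟩ := common_A_H hx1 hy1
    obtain ⟨d2, rfl, p2⟩ := common_A_H hx2 hy2
    obtain ⟨d3, rfl, p3⟩ := common_A_H hx3 hy3
    exact H_three hreg (by simpa using h12) (by simpa using h13) (by simpa using h23) p1 p2 p3
  · -- P a, A
    obtain ⟨d1, rfl, p1⟩ := common_A_P hy1 hx1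
    obtain ⟨d2, rfl, p2⟩ := common_A_P hy2 hx2
    obtain ⟨d3, rfl, p3⟩ := common_A_P hy3 hx3
    exact path_three (by simpa using h12) (by simpa using h13) (by simpa using h23) p1 p2 p3
  · -- P a, P b
    have hab : a ≠ b := by simpa using hxy
    rcases common_P_P hx1 hy1 with rfl | ⟨d1, rfl, p1, q1⟩
    · rcases common_P_P hx2 hy2 with rfl | ⟨d2, rfl, p2, q2⟩
      · exact h12 rfl
      · rcases common_P_P hx3 hy3 with rfl | ⟨d3, rfl, p3, q3⟩
        · exact h13 rfl
        · exact path_two hab (by simpa using h23) p2 q2 p3 q3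
    · rcases common_P_P hx2 hy2 with rfl | ⟨d2, rfl, p2, q2⟩
      · rcases common_P_P hx3 hy3 with rfl | ⟨d3, rfl, p3, q3⟩
        · exact h23 rfl
        · exact path_two hab (by simpa using h13) p1 q1 p3 q3
      · exact path_two hab (by simpa using h12) p1 q1 p2 q2
  · -- P a, H b
    have e1 := common_P_H hx1 hy1
    have e2 := common_P_H hx2 hy2
    exact h12 (e1.trans e2.symm)
  · -- H a, A
    obtain ⟨d1, rfl, p1⟩ := common_A_H hy1 hx1
    obtain ⟨d2, rfl, p2⟩ := common_A_H hy2 hx2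
    obtain ⟨d3, rfl, p3⟩ := common_A_H hy3 hx3
    exact H_three hreg (by simpa using h12) (by simpa using h13) (by simpa using h23) p1 p2 p3
  · -- H a, P b
    have e1 := common_P_H hy1 hx1
    have e2 := common_P_H hy2 hx2
    exact h12 (e1.trans e2.symm)
  · -- H a, H b
    have hab : a ≠ b := by simpa using hxy
    have key : ∀ d d' : Fin m, d ≠ d' → H.Adj d a → H.Adj d b → H.Adj d' a → H.Adj d' b →
        False := fun d d' hdd' p1 q1 p2 q2 =>
      hC4 a d b d' hab hdd' p1.symm q1 q2.symm p2
    rcases common_H_H hx1 hy1 with rfl | ⟨d1, rfl, p1, q1⟩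
    · rcases common_H_H hx2 hy2 with rfl | ⟨d2, rfl, p2, q2⟩
      · exact h12 rfl
      · rcases common_H_H hx3 hy3 with rfl | ⟨d3, rfl, p3, q3⟩
        · exact h13 rfl
        · exact key d2 d3 (by simpa using h23) p2 q2 p3 q3
    · rcases common_H_H hx2 hy2 with rfl | ⟨d2, rfl, p2, q2⟩
      · rcases common_H_H hx3 hy3 with rfl | ⟨d3, rfl, p3, q3⟩
        · exact h23 rfl
        · exact key d1 d3 (by simpa using h13) p1 q1 p3 q3
      · exact key d1 d2 (by simpa using h12) p1 q1 p2 q2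

lemma free (hreg : ∀ v, (H.neighborSet v).ncard = 2)
    (hC4 : ∀ a b c d : Fin m, a ≠ c → b ≠ d →
      H.Adj a b → H.Adj b c → H.Adj c d → H.Adj d a → False) :
    ¬ HasK23 (apexPlusPathFour H) := by
  rintro ⟨f, hf⟩
  have adj : ∀ (i : Fin 2) (j : Fin 3),
      (apexPlusPathFour H).Adj (f (Sum.inl i)) (f (Sum.inr j)) := by
    intro i j
    exact hf _ _ (by simp)
  have hne : ∀ s t : Fin 2 ⊕ Fin 3, s ≠ t → f s ≠ f t := fun s t h =>
    fun e => h (f.injective e)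
  exact no_three_common hreg hC4
    (hne (Sum.inl 0) (Sum.inl 1) (by simp))
    (hne (Sum.inr 0) (Sum.inr 1) (by simp))
    (hne (Sum.inr 0) (Sum.inr 2) (by simp))
    (hne (Sum.inr 1) (Sum.inr 2) (by simp))
    (adj 0 0) (adj 0 1) (adj 0 2) (adj 1 0) (adj 1 1) (adj 1 2)

lemma hasK23_of {V : Type*} {G : SimpleGraph V} {p q a b c : V}
    (hab : a ≠ b) (hac : a ≠ c) (hbc : b ≠ c)
    (hpa : G.Adj p a) (hpb : G.Adj p b) (hpc : G.Adj p c)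
    (hqa : G.Adj q a) (hqb : G.Adj q b) (hqc : G.Adj q c)
    (hpq : p ≠ q) : HasK23 G := by
  refine ⟨⟨Sum.elim ![p, q] ![a, b, c], ?_⟩, ?_⟩
  · rintro (i | i) (j | j) h <;> fin_cases i <;> fin_cases j <;> simp_all
  · rintro (i | i) (j | j) h <;> simp at h <;> fin_cases i <;> fin_cases j <;>
      simp <;>
      first
        | exact hpa | exact hpb | exact hpc | exact hqa | exact hqb | exact hqc
        | exact hpa.symm | exact hpb.symm | exact hpc.symm
        | exact hqa.symm | exact hqb.symm | exact hqc.symm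

lemma new_edge_adj {V : Type*} {G : SimpleGraph V} {u v : V} (h : u ≠ v) :
    (G ⊔ fromEdgeSet {s(u, v)}).Adj u v :=
  Or.inr ⟨by simp, h⟩

lemma le_new {V : Type*} {G : SimpleGraph V} {u v x y : V} (h : G.Adj x y) :
    (G ⊔ fromEdgeSet {s(u, v)}).Adj x y := Or.inl h

/-- saturation case where `u` is an `H`-vertex -/
lemma satH (hreg : ∀ v, (H.neighborSet v).ncard = 2) {v : Unit ⊕ Fin 4 ⊕ Fin m} (a : Fin m)
    (hne : vH a ≠ v) (hnadj : ¬ (apexPlusPathFour H).Adj (vH a) v) :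
    HasK23 ((apexPlusPathFour H) ⊔ fromEdgeSet {s(vH a, v)}) := by
  obtain ⟨n1, n2, hn, hset⟩ := Set.ncard_eq_two.mp (hreg a)
  have hn1 : H.Adj a n1 := by
    have : n1 ∈ H.neighborSet a := by rw [hset]; simp
    exact this
  have hn2 : H.Adj a n2 := by
    have : n2 ∈ H.neighborSet a := by rw [hset]; simp
    exact this
  have hvA : v ≠ vA := by
    rintro rfl
    exact hnadj (adj_apex_right.mpr (by simp))
  have hv1 : (vH n1 : Unit ⊕ Fin 4 ⊕ Fin m) ≠ v := by
    rintro rfl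
    exact hnadj (adj_HH.mpr hn1)
  have hv2 : (vH n2 : Unit ⊕ Fin 4 ⊕ Fin m) ≠ v := by
    rintro rfl
    exact hnadj (adj_HH.mpr hn2)
  refine hasK23_of (p := vA) (q := vH a) (a := vH n1) (b := vH n2) (c := v)
    (by simpa using hn) hv1 hv2
    (le_new (adj_apex_left.mpr (by simp))) (le_new (adj_apex_left.mpr (by simp)))
    (le_new (adj_apex_left.mpr hvA))
    (le_new (adj_HH.mpr hn1)) (le_new (adj_HH.mpr hn2))
    (new_edge_adj hne) (by simp)

/-- saturation case where both vertices are path vertices -/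
lemma satP (a b : Fin 4) (hne : a ≠ b) (hnadj : ¬ (pathGraph 4).Adj a b) :
    HasK23 ((apexPlusPathFour H) ⊔ fromEdgeSet {s(vP a, vP b)}) := by
  have apx : ∀ (u v : Fin 4) (c : Fin 4),
      ((apexPlusPathFour H) ⊔ fromEdgeSet {s(vP u, vP v)}).Adj vA (vP c) :=
    fun u v c => le_new (adj_apex_left.mpr (by simp))
  have apx' : ∀ (u v : Fin 4) (c : Fin 4),
      ((apexPlusPathFour H) ⊔ fromEdgeSet {s(vP u, vP v)}).Adj (vP c) vA :=
    fun u v c => (apx u v c).symm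
  have pp : ∀ (u v : Fin 4) {c d : Fin 4}, (c.val + 1 = d.val ∨ d.val + 1 = c.val) →
      ((apexPlusPathFour H) ⊔ fromEdgeSet {s(vP u, vP v)}).Adj (vP c) (vP d) := by
    intro u v c d h
    exact le_new (adj_PP.mpr (pathGraph_adj.mpr h))
  fin_cases a <;> fin_cases b
  · exact absurd rfl hne
  · exact absurd (pathGraph_adj.mpr (by decide)) hnadj
  · exact hasK23_of (p := vA) (q := vP 2) (a := vP 1) (b := vP 3) (c := vP 0)
        (by simp) (by simp) (by simp)
        (apx _ _ _) (apx _ _ _) (apx _ _ _)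
        (pp _ _ (by decide)) (pp _ _ (by decide))
        (new_edge_adj (by simp)).symm (by simp)
  · exact hasK23_of (p := vP 0) (q := vP 2) (a := vP 1) (b := vP 3) (c := vA)
        (by simp) (by simp) (by simp)
        (pp _ _ (by decide)) (new_edge_adj (by simp)) (apx' _ _ _)
        (pp _ _ (by decide)) (pp _ _ (by decide)) (apx' _ _ _) (by simp)
  · exact absurd (pathGraph_adj.mpr (by decide)) hnadj
  · exact absurd rfl hne
  · exact absurd (pathGraph_adj.mpr (by decide)) hnadj
  · exact hasK23_of (p := vA) (q := vP 1) (a := vP 0) (b := vP 2) (c := vP 3)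
        (by simp) (by simp) (by simp)
        (apx _ _ _) (apx _ _ _) (apx _ _ _)
        (pp _ _ (by decide)) (pp _ _ (by decide))
        (new_edge_adj (by simp)) (by simp)
  · exact hasK23_of (p := vA) (q := vP 2) (a := vP 1) (b := vP 3) (c := vP 0)
        (by simp) (by simp) (by simp)
        (apx _ _ _) (apx _ _ _) (apx _ _ _)
        (pp _ _ (by decide)) (pp _ _ (by decide))
        (new_edge_adj (by simp)) (by simp)
  · exact absurd (pathGraph_adj.mpr (by decide)) hnadj
  · exact absurd rfl hne
  · exact absurd (pathGraph_adj.mpr (by decide)) hnadj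
  · exact hasK23_of (p := vP 0) (q := vP 2) (a := vP 1) (b := vP 3) (c := vA)
        (by simp) (by simp) (by simp)
        (pp _ _ (by decide)) (new_edge_adj (by simp)).symm (apx' _ _ _)
        (pp _ _ (by decide)) (pp _ _ (by decide)) (apx' _ _ _) (by simp)
  · exact hasK23_of (p := vA) (q := vP 1) (a := vP 0) (b := vP 2) (c := vP 3)
        (by simp) (by simp) (by simp)
        (apx _ _ _) (apx _ _ _) (apx _ _ _)
        (pp _ _ (by decide)) (pp _ _ (by decide))
        (new_edge_adj (by simp)).symm (by simp)
  · exact absurd (pathGraph_adj.mpr (by decide)) hnadj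
  · exact absurd rfl hne

lemma saturated (hreg : ∀ v, (H.neighborSet v).ncard = 2)
    (hC4 : ∀ a b c d : Fin m, a ≠ c → b ≠ d →
      H.Adj a b → H.Adj b c → H.Adj c d → H.Adj d a → False) :
    K23Saturated (apexPlusPathFour H) := by
  refine ⟨free hreg hC4, ?_⟩
  intro u v hne hnadj
  rcases u with ⟨⟩ | a | a <;> rcases v with ⟨⟩ | b | b
  · exact absurd rfl hne
  · exact absurd (adj_apex_left.mpr (by simp)) hnadj
  · exact absurd (adj_apex_left.mpr (by simp)) hnadj
  · exact absurd (adj_apex_right.mpr (by simp)) hnadj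
  · exact satP a b (by simpa using hne) (fun h => hnadj (adj_PP.mpr h))
  · rw [show s(vP a, vH b) = s(vH b, vP a) from Sym2.eq_swap]
    exact satH hreg b hne.symm (fun h => hnadj h.symm)
  · exact absurd (adj_apex_right.mpr (by simp)) hnadj
  · exact satH hreg a hne hnadj
  · exact satH hreg a hne hnadj

lemma nbr_A : (apexPlusPathFour H).neighborSet vA = Set.range Sum.inr := by
  ext x
  rcases x with u | d | d
  · simp [mem_neighborSet, adj_apex_left]
  · simp [mem_neighborSet, adj_apex_left]
  · simp [mem_neighborSet, adj_apex_left]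

lemma nbr_P0 : (apexPlusPathFour H).neighborSet (vP 0) = {vA, vP 1} := by
  ext x
  rcases x with u | d | d
  · cases u; simp [mem_neighborSet, adj_apex_right]
  · simp only [mem_neighborSet, adj_PP, pathGraph_adj, Fin.ext_iff]
    simp
    omega
  · simp [mem_neighborSet, adj_PH]

lemma nbr_P1 : (apexPlusPathFour H).neighborSet (vP 1) = {vA, vP 0, vP 2} := by
  ext x
  rcases x with u | d | d
  · cases u; simp [mem_neighborSet, adj_apex_right]
  · simp only [mem_neighborSet, adj_PP, pathGraph_adj, Fin.ext_iff]
    simp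
    omega
  · simp [mem_neighborSet, adj_PH]

lemma nbr_P2 : (apexPlusPathFour H).neighborSet (vP 2) = {vA, vP 1, vP 3} := by
  ext x
  rcases x with u | d | d
  · cases u; simp [mem_neighborSet, adj_apex_right]
  · simp only [mem_neighborSet, adj_PP, pathGraph_adj, Fin.ext_iff]
    simp
    omega
  · simp [mem_neighborSet, adj_PH]

lemma nbr_P3 : (apexPlusPathFour H).neighborSet (vP 3) = {vA, vP 2} := by
  ext x
  rcases x with u | d | d
  · cases u; simp [mem_neighborSet, adj_apex_right]
  · simp only [mem_neighborSet, adj_PP, pathGraph_adj, Fin.ext_iff]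
    simp
    omega
  · simp [mem_neighborSet, adj_PH]

lemma nbr_H (a : Fin m) : (apexPlusPathFour H).neighborSet (vH a) =
    insert vA ((fun d => vH d) '' H.neighborSet a) := by
  ext x
  rcases x with u | d | d
  · cases u; simp [mem_neighborSet, adj_apex_right]
  · simp [mem_neighborSet, adj_HP]
  · simp [mem_neighborSet, adj_HH, adj_comm]

lemma deg_eq [DecidableRel (apexPlusPathFour H).Adj] (v : Unit ⊕ Fin 4 ⊕ Fin m) :
    (apexPlusPathFour H).degree v = ((apexPlusPathFour H).neighborSet v).ncard := by
  rw [Set.ncard_eq_toFinset_card']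
  congr 1

lemma card_edges (hreg : ∀ v, (H.neighborSet v).ncard = 2) :
    (apexPlusPathFour H).edgeSet.ncard = 2 * m + 7 := by
  classical
  have hsum := (apexPlusPathFour H).sum_degrees_eq_twice_card_edges
  rw [Fintype.sum_sum_type] at hsum
  rw [Fintype.sum_sum_type] at hsum
  have dA : (apexPlusPathFour H).degree vA = 4 + m := by
    rw [deg_eq, nbr_A, ← Set.image_univ, Set.ncard_image_of_injective _ Sum.inr_injective,
      Set.ncard_univ, Nat.card_eq_fintype_card, Fintype.card_sum, Fintype.card_fin,
      Fintype.card_fin]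
  have dP0 : (apexPlusPathFour H).degree (vP 0) = 2 := by
    rw [deg_eq, nbr_P0, Set.ncard_pair (by simp)]
  have dP1 : (apexPlusPathFour H).degree (vP 1) = 3 := by
    rw [deg_eq, nbr_P1, Set.ncard_insert_of_notMem (by simp) (Set.toFinite _),
      Set.ncard_pair (by simp)]
  have dP2 : (apexPlusPathFour H).degree (vP 2) = 3 := by
    rw [deg_eq, nbr_P2, Set.ncard_insert_of_notMem (by simp) (Set.toFinite _),
      Set.ncard_pair (by simp)]
  have dP3 : (apexPlusPathFour H).degree (vP 3) = 2 := by
    rw [deg_eq, nbr_P3, Set.ncard_pair (by simp)]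
  have dH : ∀ a : Fin m, (apexPlusPathFour H).degree (vH a) = 3 := by
    intro a
    rw [deg_eq, nbr_H, Set.ncard_insert_of_notMem (by simp) (Set.toFinite _),
      Set.ncard_image_of_injective _ (fun x y h => by simpa using h), hreg a]
  have e1 : ∑ u : Unit, (apexPlusPathFour H).degree (Sum.inl u) = 4 + m := by
    simpa using dA
  have e2 : ∑ a : Fin 4, (apexPlusPathFour H).degree (vP a) = 10 := by
    rw [Fin.sum_univ_four, dP0, dP1, dP2, dP3]
  have e3 : ∑ a : Fin m, (apexPlusPathFour H).degree (vH a) = 3 * m := by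
    rw [Finset.sum_congr rfl (fun a _ => dH a)]
    simp [Finset.sum_const, Finset.card_univ, mul_comm]
  rw [e1, e2, e3] at hsum
  have hfin : (apexPlusPathFour H).edgeSet.ncard = (apexPlusPathFour H).edgeFinset.card := by
    rw [Set.ncard_eq_toFinset_card']
    congr 1
  omega

end APPF

theorem apexPlusPathFour_saturated (n : ℕ) (hn : 8 ≤ n)
    (H : SimpleGraph (Fin (n - 5)))
    (hreg : ∀ v, (H.neighborSet v).ncard = 2)
    (hC4 : ∀ a b c d : Fin (n - 5), a ≠ c → b ≠ d →
      H.Adj a b → H.Adj b c → H.Adj c d → H.Adj d a → False) :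
    K23Saturated (apexPlusPathFour H) ∧
      (apexPlusPathFour H).edgeSet.ncard = 2 * n - 3 := by
  refine ⟨APPF.saturated hreg hC4, ?_⟩
  rw [APPF.card_edges hreg]
  omega
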